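/- Let X_λ be the vector field on ℝ³ given by X_λ(x,y,z) = (2xz + λy, 2yz − λx, 1 − x² − y² + z²). Then the function c(x,y,z) = (x² + y²)/(x² + y² + z² + 1)² is a first integral of X_λ, i.e. the directional derivative of c along X_λ vanishes identically. -/

import Mathlib

/-- The function `c(x,y,z) = (x²+y²)/(x²+y²+z²+1)²` is a first integral of the
vector field `X_λ(x,y,z) = (2xz+λy, 2yz−λx, 1−x²−y²+z²)` on ℝ³. -/
theorem stmt_0 (lam : ℝ) (p : ℝ × ℝ × ℝ) :
    fderiv ℝ (fun q : ℝ × ℝ × ℝ =>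
        (q.1 ^ 2 + q.2.1 ^ 2) / (q.1 ^ 2 + q.2.1 ^ 2 + q.2.2 ^ 2 + 1) ^ 2) p
      (2 * p.1 * p.2.2 + lam * p.2.1,
       2 * p.2.1 * p.2.2 - lam * p.1,
       1 - p.1 ^ 2 - p.2.1 ^ 2 + p.2.2 ^ 2) = 0 := by
  obtain ⟨x, y, z⟩ := p
  have hx : HasFDerivAt (fun q : ℝ × ℝ × ℝ => q.1)
      (ContinuousLinearMap.fst ℝ ℝ (ℝ × ℝ)) (x, y, z) := hasFDerivAt_fst
  have hy : HasFDerivAt (fun q : ℝ × ℝ × ℝ => q.2.1)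
      ((ContinuousLinearMap.fst ℝ ℝ ℝ).comp (ContinuousLinearMap.snd ℝ ℝ (ℝ × ℝ))) (x, y, z) :=
    hasFDerivAt_fst.comp _ hasFDerivAt_snd
  have hz : HasFDerivAt (fun q : ℝ × ℝ × ℝ => q.2.2)
      ((ContinuousLinearMap.snd ℝ ℝ ℝ).comp (ContinuousLinearMap.snd ℝ ℝ (ℝ × ℝ))) (x, y, z) :=
    hasFDerivAt_snd.comp _ hasFDerivAt_snd
  have hu := (hx.mul hx).add (hy.mul hy)
  have hv := (((hx.mul hx).add (hy.mul hy)).add (hz.mul hz)).add_const 1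
  have hv2 := hv.mul hv
  have hDne : (x * x + y * y + z * z + 1) * (x * x + y * y + z * z + 1) ≠ 0 := by
    have h1 : (0:ℝ) < x * x + y * y + z * z + 1 := by
      nlinarith [mul_self_nonneg x, mul_self_nonneg y, mul_self_nonneg z]
    exact ne_of_gt (mul_pos h1 h1)
  have hvinv := (hasFDerivAt_inv' (𝕜 := ℝ) (R := ℝ) hDne).comp (x, y, z) hv2
  have h := hu.mul hvinv
  simp only [Function.comp_def, Pi.mul_def, Pi.add_def] at h
  simp only [pow_two, div_eq_mul_inv]
  rw [h.fderiv]
  simp only [ContinuousLinearMap.coe_smul', ContinuousLinearMap.coe_sub',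
    ContinuousLinearMap.coe_comp', ContinuousLinearMap.add_apply, ContinuousLinearMap.smul_apply,
    ContinuousLinearMap.coe_fst', ContinuousLinearMap.coe_snd', Pi.add_apply, Pi.smul_apply,
    Pi.sub_apply, Function.comp_apply, smul_eq_mul, ContinuousLinearMap.sub_apply,
    ContinuousLinearMap.comp_apply, ContinuousLinearMap.neg_apply,
    ContinuousLinearMap.mulLeftRight_apply, Pi.neg_apply]
  field_simp
  ring
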